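/- arXiv:0909.4909 — 2 statements merged into one kernel-verified Lean document; each statement's English description precedes it below -/
import Mathlib

section
/- If T = (1/2)Σ m_i |v_i|², I = Σ m_i |r_i|², J = Σ m_i r_i·v_i, C = Σ m_i (x_i ẏ_i − y_i ẋ_i), and equality 2TI = J² + C² holds with I > 0, then for each i the velocity decomposes as v_i = (J/I) r_i + (C/I) r_i^⊥, where r_i^⊥ = (−y_i, x_i); i.e., all bodies share the same instantaneous dilation rate and rotation rate. -/
/-- Equality in Sundman's inequality forces each velocity to decompose as
v_i = (J/I) r_i + (C/I) r_i^⊥, with r_i^⊥ = (−y_i, x_i). -/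
theorem sundman_equality_case
    (n : ℕ) (m : Fin n → ℝ) (r v : Fin n → ℝ × ℝ) (T I J C : ℝ)
    (hm : ∀ i, 0 < m i)
    (hT : T = (1 / 2) * ∑ i, m i * ((v i).1 ^ 2 + (v i).2 ^ 2))
    (hI : I = ∑ i, m i * ((r i).1 ^ 2 + (r i).2 ^ 2))
    (hJ : J = ∑ i, m i * ((r i).1 * (v i).1 + (r i).2 * (v i).2))
    (hC : C = ∑ i, m i * ((r i).1 * (v i).2 - (r i).2 * (v i).1))
    (hIpos : 0 < I)
    (heq : 2 * T * I = J ^ 2 + C ^ 2) :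
    ∀ i, (v i).1 = (J / I) * (r i).1 + (C / I) * (-(r i).2) ∧
         (v i).2 = (J / I) * (r i).2 + (C / I) * (r i).1 := by
  set a := J / I with ha
  set b := C / I with hb
  have hI0 : I ≠ 0 := ne_of_gt hIpos
  set f : Fin n → ℝ := fun i =>
    m i * (((v i).1 - a * (r i).1 + b * (r i).2) ^ 2
      + ((v i).2 - a * (r i).2 - b * (r i).1) ^ 2) with hf
  have hexp : ∑ i, f i =
      ∑ i, (m i * ((v i).1 ^ 2 + (v i).2 ^ 2)
        - 2 * a * (m i * ((r i).1 * (v i).1 + (r i).2 * (v i).2))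
        - 2 * b * (m i * ((r i).1 * (v i).2 - (r i).2 * (v i).1))
        + (a ^ 2 + b ^ 2) * (m i * ((r i).1 ^ 2 + (r i).2 ^ 2))) :=
    Finset.sum_congr rfl fun i _ => by simp only [hf]; ring
  have hsum : ∑ i, f i = 2 * T - 2 * a * J - 2 * b * C + (a ^ 2 + b ^ 2) * I := by
    rw [hexp]
    rw [Finset.sum_add_distrib, Finset.sum_sub_distrib, Finset.sum_sub_distrib,
      ← Finset.mul_sum, ← Finset.mul_sum, ← Finset.mul_sum,
      ← hJ, ← hC, ← hI, hT]
    ring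
  have hS0 : ∑ i, f i = 0 := by
    rw [hsum, ha, hb]
    field_simp
    nlinarith [heq]
  have hnonneg : ∀ i ∈ Finset.univ, 0 ≤ f i := fun i _ =>
    mul_nonneg (le_of_lt (hm i)) (by positivity)
  have hzero := (Finset.sum_eq_zero_iff_of_nonneg hnonneg).mp hS0
  intro i
  have hi : f i = 0 := hzero i (Finset.mem_univ i)
  have hmne : m i ≠ 0 := ne_of_gt (hm i)
  have hsq : ((v i).1 - a * (r i).1 + b * (r i).2) ^ 2
      + ((v i).2 - a * (r i).2 - b * (r i).1) ^ 2 = 0 := by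
    rcases mul_eq_zero.mp hi with h | h
    · exact absurd h hmne
    · exact h
  have h1sq : ((v i).1 - a * (r i).1 + b * (r i).2) ^ 2 = 0 :=
    le_antisymm (by linarith [sq_nonneg ((v i).2 - a * (r i).2 - b * (r i).1)]) (sq_nonneg _)
  have h2sq : ((v i).2 - a * (r i).2 - b * (r i).1) ^ 2 = 0 :=
    le_antisymm (by linarith [sq_nonneg ((v i).1 - a * (r i).1 + b * (r i).2)]) (sq_nonneg _)
  have h1 := pow_eq_zero_iff two_ne_zero |>.mp h1sq
  have h2 := pow_eq_zero_iff two_ne_zero |>.mp h2sq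
  constructor <;> linarith
end

section
/- Every solution of the n-body problem in which all bodies remain on a common line for all time is planar: the motion takes place in a fixed plane containing the center of mass. -/
open Matrix

lemma hasDerivAt_cross {f g : ℝ → Fin 3 → ℝ} {f' g' : Fin 3 → ℝ} {t : ℝ}
    (hf : HasDerivAt f f' t) (hg : HasDerivAt g g' t) :
    HasDerivAt (fun s => crossProduct (f s) (g s))
      (crossProduct f' (g t) + crossProduct (f t) g') t := by
  rw [hasDerivAt_pi] at hf hg ⊢
  intro k
  fin_cases k <;>
  · simp only [cross_apply, Matrix.cons_val_zero, Matrix.cons_val_one, Matrix.head_cons,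
      Matrix.cons_val_two, Matrix.tail_cons, Pi.add_apply]
    first
    | exact (((hf 1).mul (hg 2)).sub ((hf 2).mul (hg 1))).congr_deriv (by simp; ring)
    | exact (((hf 2).mul (hg 0)).sub ((hf 0).mul (hg 2))).congr_deriv (by simp; ring)
    | exact (((hf 0).mul (hg 1)).sub ((hf 1).mul (hg 0))).congr_deriv (by simp; ring)

/-- Every collinear solution of the n-body problem (bodies on a common line
through the origin, pairwise forces along the joining lines depending only on
the mutual distances, nonzero total angular momentum) is planar: there is a
fixed plane through the origin containing all bodies for all time. -/
theorem collinear_solution_is_planar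
    (n : ℕ) (m : Fin n → ℝ) (r : Fin n → ℝ → (Fin 3 → ℝ))
    (g : Fin n → Fin n → ℝ → ℝ)
    (hm : ∀ i, 0 < m i)
    (hd : ∀ i, Differentiable ℝ (r i))
    (hd' : ∀ i, Differentiable ℝ (deriv (r i)))
    -- center of mass fixed at the origin
    (hcm : ∀ t, ∑ i, m i • r i t = 0)
    -- Newton's equations with pairwise forces along the joining lines,
    -- of magnitude depending only on the mutual distances
    (hNewton : ∀ i t, m i • deriv (deriv (r i)) t =
      ∑ j ∈ Finset.univ.erase i, g i j ‖r i t - r j t‖ • (r i t - r j t))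
    -- all bodies lie on a common line through the origin
    (hcollinear : ∀ t i j, crossProduct (r i t) (r j t) = 0)
    -- nonzero total angular momentum
    (hK : ∀ t, ∑ i, m i • crossProduct (r i t) (deriv (r i) t) ≠ 0) :
    ∃ nvec : Fin 3 → ℝ, nvec ≠ 0 ∧ ∀ i t, ∑ k, nvec k * r i t k = 0 := by
  set K : ℝ → Fin 3 → ℝ := fun t => ∑ i, m i • crossProduct (r i t) (deriv (r i) t) with hKdef
  -- K has derivative 0 everywhere
  have hKderiv : ∀ t, HasDerivAt K 0 t := by
    intro t
    have h1 : HasDerivAt K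
        (∑ i, m i • (crossProduct (deriv (r i) t) (deriv (r i) t)
          + crossProduct (r i t) (deriv (deriv (r i)) t))) t := by
      apply HasDerivAt.fun_sum
      intro i _
      exact (hasDerivAt_cross ((hd i).differentiableAt.hasDerivAt)
        ((hd' i).differentiableAt.hasDerivAt)).const_smul (m i)
    have h2 : (∑ i, m i • (crossProduct (deriv (r i) t) (deriv (r i) t)
        + crossProduct (r i t) (deriv (deriv (r i)) t))) = 0 := by
      apply Finset.sum_eq_zero
      intro i _
      rw [cross_self, zero_add, ← _root_.map_smul, hNewton i t, map_sum]
      apply Finset.sum_eq_zero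
      intro j _
      rw [_root_.map_smul, map_sub, cross_self, hcollinear t i j, sub_zero, smul_zero]
    rw [h2] at h1
    exact h1
  have hKconst : ∀ t, K t = K 0 := by
    intro t
    exact is_const_of_deriv_eq_zero (fun s => (hKderiv s).differentiableAt)
      (fun s => (hKderiv s).deriv) t 0
  refine ⟨K 0, hK 0, ?_⟩
  intro i t
  have h3 : ∀ j : Fin n, (r i t) ⬝ᵥ crossProduct (r j t) (deriv (r j) t) = 0 := by
    intro j
    rw [triple_product_permutation, triple_product_permutation, hcollinear t i j]
    simp [dotProduct]
  have horth : (r i t) ⬝ᵥ K t = 0 := by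
    rw [hKdef]
    simp only [dotProduct, Finset.sum_apply, Pi.smul_apply, smul_eq_mul, Finset.mul_sum]
    rw [Finset.sum_comm]
    apply Finset.sum_eq_zero
    intro j _
    have : ∑ k, r i t k * (m j * crossProduct (r j t) (deriv (r j) t) k)
        = m j * ((r i t) ⬝ᵥ crossProduct (r j t) (deriv (r j) t)) := by
      rw [dotProduct, Finset.mul_sum]
      exact Finset.sum_congr rfl fun k _ => by ring
    rw [this, h3 j, mul_zero]
  have hfin : (r i t) ⬝ᵥ K 0 = 0 := by rw [← hKconst t]; exact horth
  rw [dotProduct] at hfin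
  calc ∑ k, K 0 k * r i t k = ∑ k, r i t k * K 0 k :=
        Finset.sum_congr rfl fun k _ => mul_comm _ _
    _ = 0 := hfin
end
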